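/- For every n ≥ 2 there exist convex bodies K and L in ℝⁿ, containing the origin in their interiors, that are not congruent (i.e., there is no isometry T of ℝⁿ with T(K) = L) but satisfy K \ L = −(L \ K). Specifically, one may take K and L to be the convex polytopes obtained from a rectangular box R = [−a₁,a₁] × ⋯ × [−aₙ,aₙ] (with distinct positive a₁,…,aₙ) by truncating, with hyperplane cuts of sufficiently small depth λ > 0, two vertices u and v joined by an edge (for K), and the vertices u and −v (for L). -/

import Mathlib

open Set

section AuxNoncongruent

variable {n : ℕ}

private def i0 (hn : 2 ≤ n) : Fin n := ⟨0, by omega⟩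
private def i1 (hn : 2 ≤ n) : Fin n := ⟨1, by omega⟩

private lemma i0_ne_i1 (hn : 2 ≤ n) : i0 hn ≠ i1 hn := by simp [i0, i1, Fin.ext_iff]

/-- The truncated box: for `σ = 1` we cut the two adjacent vertices `(−2,1)` and `(2,1)`
(in the first two coordinates), for `σ = -1` we cut `(2,1)` and `(2,−1)`. -/
private def body (hn : 2 ≤ n) (σ : ℝ) : Set (EuclideanSpace ℝ (Fin n)) :=
  {x | -2 ≤ x (i0 hn) ∧ x (i0 hn) ≤ 2 ∧ -1 ≤ x (i1 hn) ∧ x (i1 hn) ≤ 1 ∧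
    (∀ i : Fin n, 2 ≤ i.val → |x i| ≤ 1/(8*n)) ∧
    x (i0 hn) + x (i1 hn) ≤ 5/2 ∧ σ * (x (i1 hn) - x (i0 hn)) ≤ 5/2}

private lemma body_convex (hn : 2 ≤ n) (σ : ℝ) : Convex ℝ (body hn σ) := by
  intro x hx y hy a b ha hb hab
  obtain ⟨h1,h2,h3,h4,h5,h6,h7⟩ := hx
  obtain ⟨g1,g2,g3,g4,g5,g6,g7⟩ := hy
  have hev : ∀ i : Fin n, (a • x + b • y) i = a * x i + b * y i := by
    intro i; simp [PiLp.add_apply, PiLp.smul_apply, smul_eq_mul]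
  refine ⟨?_,?_,?_,?_,?_,?_,?_⟩ <;> simp only [hev]
  · nlinarith
  · nlinarith
  · nlinarith
  · nlinarith
  · intro i hi
    calc |a * x i + b * y i| ≤ |a * x i| + |b * y i| := abs_add_le _ _
      _ = a * |x i| + b * |y i| := by rw [abs_mul, abs_mul, abs_of_nonneg ha, abs_of_nonneg hb]
      _ ≤ a * (1/(8*n)) + b * (1/(8*n)) := by
          gcongr; exacts [h5 i hi, g5 i hi]
      _ = 1/(8*n) := by rw [← add_mul, hab, one_mul]
  · nlinarith
  · have e1 : σ * (x (i1 hn) - x (i0 hn)) ≤ 5/2 := h7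
    have e2 : σ * (y (i1 hn) - y (i0 hn)) ≤ 5/2 := g7
    nlinarith [mul_le_mul_of_nonneg_left e1 ha, mul_le_mul_of_nonneg_left e2 hb]

private lemma cont_apply (i : Fin n) : Continuous fun x : EuclideanSpace ℝ (Fin n) => x i :=
  (EuclideanSpace.proj i).continuous

private lemma body_closed (hn : 2 ≤ n) (σ : ℝ) : IsClosed (body hn σ) := by
  have h0 := cont_apply (n := n) (i0 hn)
  have h1 := cont_apply (n := n) (i1 hn)
  apply IsClosed.inter (isClosed_le continuous_const h0)
  apply IsClosed.inter (isClosed_le h0 continuous_const)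
  apply IsClosed.inter (isClosed_le continuous_const h1)
  apply IsClosed.inter (isClosed_le h1 continuous_const)
  apply IsClosed.inter
  · have heq : {x : EuclideanSpace ℝ (Fin n) | ∀ i : Fin n, 2 ≤ i.val → |x i| ≤ 1/(8*(n:ℝ))}
        = ⋂ i : Fin n, {x : EuclideanSpace ℝ (Fin n) | 2 ≤ i.val → |x i| ≤ 1/(8*(n:ℝ))} := by
      ext x; simp only [Set.mem_setOf_eq, Set.mem_iInter]
    show IsClosed {x : EuclideanSpace ℝ (Fin n) | ∀ i : Fin n, 2 ≤ i.val → |x i| ≤ 1/(8*(n:ℝ))}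
    rw [heq]
    refine isClosed_iInter fun i => ?_
    by_cases h : 2 ≤ i.val
    · rw [show {x : EuclideanSpace ℝ (Fin n) | 2 ≤ i.val → |x i| ≤ 1/(8*(n:ℝ))}
          = {x : EuclideanSpace ℝ (Fin n) | |x i| ≤ 1/(8*(n:ℝ))} by ext y; simp [h]]
      exact isClosed_le (cont_apply i).abs continuous_const
    · rw [show {x : EuclideanSpace ℝ (Fin n) | 2 ≤ i.val → |x i| ≤ 1/(8*(n:ℝ))}
          = Set.univ by ext y; simp [h]]
      exact isClosed_univ
  apply IsClosed.inter (isClosed_le (h0.add h1) continuous_const)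
  exact isClosed_le (continuous_const.mul (h1.sub h0)) continuous_const

private lemma body_compact (hn : 2 ≤ n) (σ : ℝ) : IsCompact (body hn σ) := by
  refine Metric.isCompact_of_isClosed_isBounded (body_closed hn σ) ?_
  refine (Metric.isBounded_closedBall (x := (0 : EuclideanSpace ℝ (Fin n))) (r := 2*n)).subset ?_
  intro x hx
  obtain ⟨h1,h2,h3,h4,h5,h6,h7⟩ := hx
  have hn1 : (1:ℝ) ≤ n := by exact_mod_cast (by omega : 1 ≤ n)
  have hco : ∀ i : Fin n, ‖x i‖^2 ≤ 4 := by
    intro i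
    have : |x i| ≤ 2 := by
      rcases Nat.lt_or_ge i.val 2 with h | h
      · interval_cases hiv : i.val
        · have hi : i = i0 hn := by apply Fin.ext; simp [hiv, i0]
          rw [hi, abs_le]; exact ⟨h1, h2⟩
        · have hi : i = i1 hn := by apply Fin.ext; simp [hiv, i1]
          rw [hi, abs_le]; constructor <;> linarith
      · refine (h5 i h).trans ?_
        rw [div_le_iff₀ (by positivity)]; nlinarith
    calc ‖x i‖^2 = |x i|^2 := by rw [Real.norm_eq_abs]
      _ ≤ 2^2 := by nlinarith [abs_nonneg (x i)]
      _ = 4 := by norm_num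
  rw [Metric.mem_closedBall, dist_zero_right, EuclideanSpace.norm_eq]
  have hb : (∑ i, ‖x i‖^2) ≤ (2*(n:ℝ))^2 := by
    calc (∑ i, ‖x i‖^2) ≤ ∑ _i : Fin n, (4:ℝ) := Finset.sum_le_sum fun i _ => hco i
      _ = 4*n := by simp [mul_comm]
      _ ≤ (2*(n:ℝ))^2 := by nlinarith
  calc Real.sqrt (∑ i, ‖x i‖^2) ≤ Real.sqrt ((2*(n:ℝ))^2) := Real.sqrt_le_sqrt hb
    _ = 2*n := Real.sqrt_sq (by positivity)

private lemma coord_le_norm (x : EuclideanSpace ℝ (Fin n)) (i : Fin n) : |x i| ≤ ‖x‖ := by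
  rw [EuclideanSpace.norm_eq]
  rw [show |x i| = Real.sqrt (‖x i‖^2) by
    rw [Real.sqrt_sq_eq_abs, Real.norm_eq_abs, abs_abs]]
  apply Real.sqrt_le_sqrt
  exact Finset.single_le_sum (f := fun j => ‖x j‖^2) (fun j _ => sq_nonneg _) (Finset.mem_univ i)

private lemma zero_mem_interior (hn : 2 ≤ n) (σ : ℝ) (hσ : |σ| ≤ 1) :
    (0 : EuclideanSpace ℝ (Fin n)) ∈ interior (body hn σ) := by
  have hn1 : (1:ℝ) ≤ n := by exact_mod_cast (by omega : 1 ≤ n)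
  have hr : (0:ℝ) < 1/(16*n) := by positivity
  apply mem_interior.mpr
  refine ⟨Metric.ball 0 (1/(16*n)), ?_, Metric.isOpen_ball, Metric.mem_ball_self hr⟩
  intro x hx
  rw [Metric.mem_ball, dist_zero_right] at hx
  have hco : ∀ i : Fin n, |x i| ≤ 1/(16*n) := fun i => (coord_le_norm x i).trans hx.le
  have h16 : (1:ℝ)/(16*n) ≤ 1/16 := by
    apply div_le_div_of_nonneg_left (by norm_num) (by norm_num)
    nlinarith
  have h0 := abs_le.mp (hco (i0 hn))
  have h1 := abs_le.mp (hco (i1 hn))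
  refine ⟨by linarith, by linarith, by linarith, by linarith, ?_, by linarith, ?_⟩
  · intro i _
    refine (hco i).trans ?_
    apply div_le_div_of_nonneg_left (by norm_num) (by positivity) (by nlinarith)
  · have hh : |σ * (x (i1 hn) - x (i0 hn))| ≤ 1 * (1/(16*n) + 1/(16*n)) := by
      rw [abs_mul]
      apply mul_le_mul hσ ((abs_sub _ _).trans
        (by have := hco (i1 hn); have := hco (i0 hn); linarith)) (abs_nonneg _) zero_le_one
    have := (abs_le.mp hh).2
    linarith

private lemma diff_symm (hn : 2 ≤ n) :
    body hn 1 \ body hn (-1) = -(body hn (-1) \ body hn 1) := by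
  have hK : body hn 1 \ body hn (-1) =
      {x : EuclideanSpace ℝ (Fin n) | -2 ≤ x (i0 hn) ∧ x (i0 hn) ≤ 2 ∧ -1 ≤ x (i1 hn) ∧
        x (i1 hn) ≤ 1 ∧ (∀ i : Fin n, 2 ≤ i.val → |x i| ≤ 1/(8*n)) ∧
        5/2 < x (i0 hn) - x (i1 hn)} := by
    ext x
    simp only [Set.mem_diff, body, Set.mem_setOf_eq]
    constructor
    · rintro ⟨⟨h1,h2,h3,h4,h5,h6,h7⟩, hnl⟩
      refine ⟨h1,h2,h3,h4,h5, ?_⟩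
      by_contra hc
      push_neg at hc
      exact hnl ⟨h1,h2,h3,h4,h5,h6, by linarith⟩
    · rintro ⟨h1,h2,h3,h4,h5,h8⟩
      refine ⟨⟨h1,h2,h3,h4,h5, by linarith, by linarith⟩, ?_⟩
      rintro ⟨_,_,_,_,_,_,g7⟩
      linarith
  have hL : body hn (-1) \ body hn 1 =
      {x : EuclideanSpace ℝ (Fin n) | -2 ≤ x (i0 hn) ∧ x (i0 hn) ≤ 2 ∧ -1 ≤ x (i1 hn) ∧
        x (i1 hn) ≤ 1 ∧ (∀ i : Fin n, 2 ≤ i.val → |x i| ≤ 1/(8*n)) ∧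
        5/2 < x (i1 hn) - x (i0 hn)} := by
    ext x
    simp only [Set.mem_diff, body, Set.mem_setOf_eq]
    constructor
    · rintro ⟨⟨h1,h2,h3,h4,h5,h6,h7⟩, hnl⟩
      refine ⟨h1,h2,h3,h4,h5, ?_⟩
      by_contra hc
      push_neg at hc
      exact hnl ⟨h1,h2,h3,h4,h5,h6, by linarith⟩
    · rintro ⟨h1,h2,h3,h4,h5,h8⟩
      refine ⟨⟨h1,h2,h3,h4,h5, by linarith, by linarith⟩, ?_⟩
      rintro ⟨_,_,_,_,_,_,g7⟩
      linarith
  rw [hK, hL]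
  ext x
  rw [Set.mem_neg]
  simp only [Set.mem_setOf_eq, PiLp.neg_apply]
  constructor
  · rintro ⟨h1,h2,h3,h4,h5,h8⟩
    exact ⟨by linarith, by linarith, by linarith, by linarith,
      fun i hi => by rw [abs_neg]; exact h5 i hi, by linarith⟩
  · rintro ⟨h1,h2,h3,h4,h5,h8⟩
    exact ⟨by linarith, by linarith, by linarith, by linarith,
      fun i hi => by have := h5 i hi; rwa [abs_neg] at this, by linarith⟩

private def pt (hn : 2 ≤ n) (a b : ℝ) : EuclideanSpace ℝ (Fin n) :=
  WithLp.toLp 2 (fun i => if i = i0 hn then a else if i = i1 hn then b else 0)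

private lemma pt_apply_i0 (hn : 2 ≤ n) (a b : ℝ) : pt hn a b (i0 hn) = a := by simp [pt]
private lemma pt_apply_i1 (hn : 2 ≤ n) (a b : ℝ) : pt hn a b (i1 hn) = b := by
  simp [pt, (i0_ne_i1 hn).symm]
private lemma pt_apply_other (hn : 2 ≤ n) (a b : ℝ) (i : Fin n) (h0 : i ≠ i0 hn)
    (h1 : i ≠ i1 hn) : pt hn a b i = 0 := by simp [pt, h0, h1]

private lemma dist_sq (x y : EuclideanSpace ℝ (Fin n)) :
    dist x y ^ 2 = ∑ i, (x i - y i)^2 := by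
  rw [EuclideanSpace.dist_eq, Real.sq_sqrt (by positivity)]
  congr 1; ext i; rw [Real.dist_eq, sq_abs]

private lemma sum_split (hn : 2 ≤ n) (f : Fin n → ℝ) :
    ∑ i, f i = f (i0 hn) + f (i1 hn) + ∑ i ∈ Finset.univ \ {i0 hn, i1 hn}, f i := by
  have h : ({i0 hn, i1 hn} : Finset (Fin n)) ⊆ Finset.univ := Finset.subset_univ _
  rw [← Finset.sum_sdiff h, Finset.sum_pair (i0_ne_i1 hn)]
  ring

private lemma pt_dist_sq (hn : 2 ≤ n) (a b a' b' : ℝ) :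
    dist (pt hn a b) (pt hn a' b') ^ 2 = (a-a')^2 + (b-b')^2 := by
  rw [dist_sq, sum_split hn]
  rw [pt_apply_i0, pt_apply_i0, pt_apply_i1, pt_apply_i1]
  have h0 : ∑ i ∈ Finset.univ \ {i0 hn, i1 hn}, (pt hn a b i - pt hn a' b' i)^2 = 0 := by
    apply Finset.sum_eq_zero
    intro i hi
    simp only [Finset.mem_sdiff, Finset.mem_insert, Finset.mem_singleton] at hi
    push_neg at hi
    rw [pt_apply_other hn a b i hi.2.1 hi.2.2, pt_apply_other hn a' b' i hi.2.1 hi.2.2]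
    ring
  rw [h0]; ring

private lemma mem_ball_K (hn : 2 ≤ n) (x : EuclideanSpace ℝ (Fin n)) (hx : x ∈ body hn 1) :
    dist x (pt hn 0 (-1/4)) ^ 2 ≤ 73/16 + 1/128 := by
  obtain ⟨h1,h2,h3,h4,h5,h6,h7⟩ := hx
  rw [dist_sq, sum_split hn, pt_apply_i0, pt_apply_i1]
  have hn1 : (1:ℝ) ≤ n := by exact_mod_cast (by omega : 1 ≤ n)
  have htail : ∑ i ∈ Finset.univ \ {i0 hn, i1 hn}, (x i - pt hn 0 (-1/4) i)^2 ≤ 1/128 := by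
    have hbd : ∀ i ∈ Finset.univ \ {i0 hn, i1 hn},
        (x i - pt hn 0 (-1/4) i)^2 ≤ (1/(8*n))^2 := by
      intro i hi
      simp only [Finset.mem_sdiff, Finset.mem_insert, Finset.mem_singleton] at hi
      push_neg at hi
      rw [pt_apply_other hn 0 (-1/4) i hi.2.1 hi.2.2]
      have hiv : 2 ≤ i.val := by
        have hv0 : i.val ≠ 0 := fun hc => hi.2.1 (Fin.ext (by simp [hc, i0]))
        have hv1 : i.val ≠ 1 := fun hc => hi.2.2 (Fin.ext (by simp [hc, i1]))
        omega
      have habs := abs_le.mp (h5 i hiv)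
      have he : (0:ℝ) < 1/(8*n) := by positivity
      nlinarith [habs.1, habs.2]
    calc ∑ i ∈ Finset.univ \ {i0 hn, i1 hn}, (x i - pt hn 0 (-1/4) i)^2
        ≤ ∑ _i ∈ Finset.univ \ {i0 hn, i1 hn}, (1/(8*(n:ℝ)))^2 := Finset.sum_le_sum hbd
      _ = (Finset.univ \ {i0 hn, i1 hn}).card * (1/(8*(n:ℝ)))^2 := by
          rw [Finset.sum_const, nsmul_eq_mul]
      _ ≤ n * (1/(8*(n:ℝ)))^2 := by
          have hcard : ((Finset.univ \ {i0 hn, i1 hn}).card : ℝ) ≤ n := by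
            exact_mod_cast (Finset.card_le_univ _).trans_eq (by simp)
          have hp : (0:ℝ) ≤ (1/(8*(n:ℝ)))^2 := by positivity
          nlinarith
      _ = 1/(64*n) := by field_simp; ring
      _ ≤ 1/128 := by
          have h2n : (2:ℝ) ≤ n := by exact_mod_cast hn
          rw [div_le_div_iff₀ (by positivity) (by norm_num)]
          linarith
  have hhead : (x (i0 hn) - 0)^2 + (x (i1 hn) - (-1/4))^2 ≤ 73/16 := by
    rcases le_or_gt (x (i1 hn)) (1/2) with hc | hc
    · nlinarith
    · have hx0u : x (i0 hn) ≤ 5/2 - x (i1 hn) := by linarith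
      have hx0l : -(5/2 - x (i1 hn)) ≤ x (i0 hn) := by
        have h7' : (1:ℝ) * (x (i1 hn) - x (i0 hn)) ≤ 5/2 := h7
        linarith
      nlinarith [mul_nonneg (by linarith : (0:ℝ) ≤ x (i1 hn) - 1/2)
        (by linarith : (0:ℝ) ≤ 7/4 - x (i1 hn))]
  linarith

private lemma pair_sum_le (v1 v2 v3 v4 c : EuclideanSpace ℝ (Fin n)) :
    dist v1 v2^2 + dist v1 v3^2 + dist v1 v4^2 + dist v2 v3^2 + dist v2 v4^2 + dist v3 v4^2
      ≤ 4*(dist v1 c^2 + dist v2 c^2 + dist v3 c^2 + dist v4 c^2) := by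
  simp only [dist_sq]
  rw [← Finset.sum_add_distrib, ← Finset.sum_add_distrib, ← Finset.sum_add_distrib,
    ← Finset.sum_add_distrib, ← Finset.sum_add_distrib, ← Finset.sum_add_distrib,
    ← Finset.sum_add_distrib, ← Finset.sum_add_distrib, Finset.mul_sum]
  apply Finset.sum_le_sum
  intro i _
  nlinarith [sq_nonneg ((v1 i - c i) + (v2 i - c i) + (v3 i - c i) + (v4 i - c i))]

private lemma pt_mem_L (hn : 2 ≤ n) (a b : ℝ) (h1 : -2 ≤ a) (h2 : a ≤ 2) (h3 : -1 ≤ b)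
    (h4 : b ≤ 1) (h6 : a + b ≤ 5/2) (h7 : a - b ≤ 5/2) : pt hn a b ∈ body hn (-1) := by
  refine ⟨?_,?_,?_,?_,?_,?_,?_⟩ <;>
    simp only [pt_apply_i0, pt_apply_i1]
  · exact h1
  · exact h2
  · exact h3
  · exact h4
  · intro i hi
    have hi0 : i ≠ i0 hn := fun hc => by simp [hc, i0] at hi
    have hi1 : i ≠ i1 hn := fun hc => by simp [hc, i1] at hi
    rw [pt_apply_other hn a b i hi0 hi1]
    simp
  · exact h6
  · linarith

private lemma not_congruent (hn : 2 ≤ n) :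
    ¬ ∃ T : EuclideanSpace ℝ (Fin n) ≃ᵢ EuclideanSpace ℝ (Fin n),
      T '' (body hn 1) = body hn (-1) := by
  rintro ⟨T, hT⟩
  -- four points of L
  have hw1 : pt hn (-2) 1 ∈ body hn (-1) := pt_mem_L hn _ _ (by norm_num) (by norm_num)
    (by norm_num) (by norm_num) (by norm_num) (by norm_num)
  have hw2 : pt hn (-2) (-1) ∈ body hn (-1) := pt_mem_L hn _ _ (by norm_num) (by norm_num)
    (by norm_num) (by norm_num) (by norm_num) (by norm_num)
  have hw3 : pt hn 2 (1/2) ∈ body hn (-1) := pt_mem_L hn _ _ (by norm_num) (by norm_num)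
    (by norm_num) (by norm_num) (by norm_num) (by norm_num)
  have hw4 : pt hn 2 (-1/2) ∈ body hn (-1) := pt_mem_L hn _ _ (by norm_num) (by norm_num)
    (by norm_num) (by norm_num) (by norm_num) (by norm_num)
  -- their preimages lie in K
  have hv : ∀ w : EuclideanSpace ℝ (Fin n), w ∈ body hn (-1) → T.symm w ∈ body hn 1 := by
    intro w hw
    rw [← hT] at hw
    obtain ⟨k, hk, hTk⟩ := hw
    have hkk : T.symm w = k := by rw [← hTk]; exact T.symm_apply_apply k
    rwa [hkk]
  set c := pt hn 0 (-1/4) with hc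
  have hub : ∀ w : EuclideanSpace ℝ (Fin n), w ∈ body hn (-1) →
      dist (T.symm w) c ^ 2 ≤ 73/16 + 1/128 :=
    fun w hw => mem_ball_K hn _ (hv w hw)
  have hkey := pair_sum_le (T.symm (pt hn (-2) 1)) (T.symm (pt hn (-2) (-1)))
    (T.symm (pt hn 2 (1/2))) (T.symm (pt hn 2 (-1/2))) c
  have hdd : ∀ a b a' b' : ℝ,
      dist (T.symm (pt hn a b)) (T.symm (pt hn a' b')) ^ 2 = (a-a')^2 + (b-b')^2 := by
    intro a b a' b'
    rw [T.symm.dist_eq, pt_dist_sq]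
  rw [hdd, hdd, hdd, hdd, hdd, hdd] at hkey
  have hb1 := hub _ hw1
  have hb2 := hub _ hw2
  have hb3 := hub _ hw3
  have hb4 := hub _ hw4
  have hsq : ∀ y : EuclideanSpace ℝ (Fin n), dist y c ^ 2 ≤ 73/16 + 1/128 →
      dist y c ^ 2 ≤ 73/16 + 1/128 := fun _ h => h
  nlinarith [hkey, hb1, hb2, hb3, hb4]

end AuxNoncongruent

theorem exists_noncongruent_bodies_diff_symm {n : ℕ} (hn : 2 ≤ n) :
    ∃ K L : Set (EuclideanSpace ℝ (Fin n)),
      IsCompact K ∧ Convex ℝ K ∧ (0 : EuclideanSpace ℝ (Fin n)) ∈ interior K ∧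
      IsCompact L ∧ Convex ℝ L ∧ (0 : EuclideanSpace ℝ (Fin n)) ∈ interior L ∧
      (¬ ∃ T : EuclideanSpace ℝ (Fin n) ≃ᵢ EuclideanSpace ℝ (Fin n), T '' K = L) ∧
      K \ L = -(L \ K) := by
  exact ⟨body hn 1, body hn (-1), body_compact hn 1, body_convex hn 1,
    zero_mem_interior hn 1 (by norm_num), body_compact hn (-1), body_convex hn (-1),
    zero_mem_interior hn (-1) (by norm_num), not_congruent hn, diff_symm hn⟩
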